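/- Fidelity after GHZ entanglement swapping: for every n ≥ 1 and all two-qubit density matrices ρ₁ on A R₁¹, ρ₂ on R₁² R₂¹, …, ρ_n on R_{n−1}² R_n¹, ρ_{n+1} on R_n² B, the fidelity of the output of the GHZ entanglement swapping channel with the (n+2)-party GHZ state satisfies ⟨GHZ_{n+2}| L^{GHZ;n}(ρ₁ ⊗ ρ₂ ⊗ ⋯ ⊗ ρ_{n+1}) |GHZ_{n+2}⟩ = ∑_{z⃗ ∈ {0,1}^n} ⟨Φ^{z₁⊕⋯⊕z_n, 0}|ρ₁|Φ^{z₁⊕⋯⊕z_n, 0}⟩ · ∏_{j=1}^{n} ⟨Φ^{z_j,0}|ρ_{j+1}|Φ^{z_j,0}⟩, where ⊕ is addition mod 2. -/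

import Mathlib

open BigOperators Matrix
open scoped ComplexOrder

noncomputable section

/-- A qubit, with the bit-flip arithmetic of `ZMod 2`. -/
abbrev Qb := ZMod 2

/-- The qubit Bell state vector `|Φ^{z,x}⟩ = (Z^z X^x ⊗ 1)|Φ⟩`. -/
def bellVec (z x : Qb) : Qb × Qb → ℂ :=
  fun jk => if jk.1 = jk.2 + x then ((-1 : ℂ)) ^ ((jk.1 * z).val) / (Real.sqrt 2 : ℂ) else 0

/-- The index of the total input system `A R₁¹ R₁² ⋯ R_n¹ R_n² B`:
the `j`-th middle factor is the pair `(R_{j+1}¹, R_{j+1}²)`. -/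
abbrev GIn (n : ℕ) := Qb × (Fin n → Qb × Qb) × Qb

/-- The index of the output system `A R₁¹ ⋯ R_n¹ B`. -/
abbrev GOut (n : ℕ) := Qb × (Fin n → Qb) × Qb

/-- The contraction map `K^x = ⟨x|₂ CNOT : ℂ² ⊗ ℂ² → ℂ²`, with the CNOT controlled
on the first factor. -/
def Kc (x : Qb) : Matrix Qb (Qb × Qb) ℂ :=
  Matrix.of fun r ct => if r = ct.1 ∧ x = ct.2 + ct.1 then 1 else 0

/-- The preceding measurement outcome `x_{j-1}` used for the correction `X^{x_{j-1}}`
on `R_j¹` (zero for the first node). -/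
def xprev (n : ℕ) (x : Fin n → Qb) (j : Fin n) : Qb :=
  if h : (j : ℕ) = 0 then 0 else x ⟨(j : ℕ) - 1, by have := j.isLt; omega⟩

/-- The last measurement outcome `x_n`, used for the correction `X^{x_n}` on `B`. -/
def xlast (n : ℕ) (x : Fin n → Qb) : Qb :=
  if h : 0 < n then x ⟨n - 1, by omega⟩ else 0

/-- The operator `P^{x⃗} = 1_A ⊗ K^{x₁} ⊗ (K^{x₂} X^{x₁}) ⊗ ⋯ ⊗ (K^{x_n} X^{x_{n-1}}) ⊗ X^{x_n}`. -/
def Pop (n : ℕ) (x : Fin n → Qb) : Matrix (GOut n) (GIn n) ℂ :=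
  Matrix.of fun o s =>
    (if o.1 = s.1 then 1 else 0)
      * (∏ j : Fin n, Kc (x j) (o.2.1 j) ((s.2.1 j).1 + xprev n x j, (s.2.1 j).2))
      * (if o.2.2 = s.2.2 + xlast n x then 1 else 0)

/-- The GHZ entanglement swapping channel `L^{GHZ;n}(ρ) = ∑_{x⃗} P^{x⃗} ρ (P^{x⃗})†`. -/
def ghzChannel (n : ℕ) (ρ : Matrix (GIn n) (GIn n) ℂ) : Matrix (GOut n) (GOut n) ℂ :=
  ∑ x : Fin n → Qb, Pop n x * ρ * (Pop n x)ᴴ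

/-- The `(n+2)`-qubit GHZ state vector `(|0⟩^{⊗(n+2)} + |1⟩^{⊗(n+2)})/√2`. -/
def ghzVec (n : ℕ) : GOut n → ℂ := fun o =>
  if o.1 = 0 ∧ (∀ j, o.2.1 j = 0) ∧ o.2.2 = 0 then ((Real.sqrt 2 : ℂ))⁻¹
  else if o.1 = 1 ∧ (∀ j, o.2.1 j = 1) ∧ o.2.2 = 1 then ((Real.sqrt 2 : ℂ))⁻¹
  else 0

/-- The left subsystem paired with `ρ_{i+1}`: `A` for `i = 0`, else `R_i²`. -/
def leftIdx (n : ℕ) (s : GIn n) (i : Fin (n + 1)) : Qb :=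
  if h : (i : ℕ) = 0 then s.1
  else (s.2.1 ⟨(i : ℕ) - 1, by have := i.isLt; omega⟩).2

/-- The right subsystem paired with `ρ_{i+1}`: `R_{i+1}¹` for `i < n`, else `B`. -/
def rightIdx (n : ℕ) (s : GIn n) (i : Fin (n + 1)) : Qb :=
  if h : (i : ℕ) < n then (s.2.1 ⟨(i : ℕ), h⟩).1 else s.2.2

/-- The tensor product `ρ₁ ⊗ ⋯ ⊗ ρ_{n+1}` with `ρ₁` on `A R₁¹`, `ρ_{j+1}` on
`R_j² R_{j+1}¹`, and `ρ_{n+1}` on `R_n² B`. -/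
def chainState (n : ℕ) (ρ : Fin (n + 1) → Matrix (Qb × Qb) (Qb × Qb) ℂ) :
    Matrix (GIn n) (GIn n) ℂ :=
  Matrix.of fun s s' =>
    ∏ i : Fin (n + 1), ρ i (leftIdx n s i, rightIdx n s i) (leftIdx n s' i, rightIdx n s' i)

/-- The fidelity `⟨ψ|ρ|ψ⟩` of a state `ρ` with a pure state `|ψ⟩`. -/
def fidTo {m' : Type*} [Fintype m'] (ψ : m' → ℂ) (ρ : Matrix m' m' ℂ) : ℂ :=
  ∑ i, ∑ j, (starRingEnd ℂ) (ψ i) * ρ i j * ψ j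

/-! ### Basic `Qb` helpers -/

def sgn (a : Qb) : ℂ := (-1) ^ a.val

lemma qb01 : ∀ c : Qb, c = 0 ∨ c = 1 := by decide

lemma sgn_zero : sgn 0 = 1 := rfl

lemma sgn_add (a b : Qb) : sgn (a + b) = sgn a * sgn b := by
  rcases qb01 a with ha | ha <;> rcases qb01 b with hb | hb <;>
    subst ha <;> subst hb <;>
    simp [sgn, show ((1:Qb)+1).val = 0 from rfl, show (1:Qb).val = 1 from rfl,
      show (0:Qb).val = 0 from rfl]

lemma sum_qb (f : Qb → ℂ) : ∑ a, f a = f 0 + f 1 := by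
  rw [show (Finset.univ : Finset Qb) = {0, 1} by decide]; simp

lemma sum_sgn (e : Qb) : ∑ t : Qb, sgn (e * t) = if e = 0 then 2 else 0 := by
  rcases qb01 e with he | he <;> subst he <;>
    rw [sum_qb] <;>
    simp [sgn, show ((1:Qb)*1).val = 1 from rfl, show (1:Qb).val = 1 from rfl,
      show (0:Qb).val = 0 from rfl] <;> norm_num

lemma star_sgn (a : Qb) : (starRingEnd ℂ) (sgn a) = sgn a := by
  simp [sgn]

lemma rr : (Real.sqrt 2 : ℂ) * (Real.sqrt 2 : ℂ) = 2 := by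
  rw [← Complex.ofReal_mul, Real.mul_self_sqrt (by norm_num)]
  norm_num

lemma rinv2 : ((Real.sqrt 2 : ℂ))⁻¹ * ((Real.sqrt 2 : ℂ))⁻¹ = (2:ℂ)⁻¹ := by
  rw [← mul_inv, rr]

lemma addadd (a b : Qb) : a + b + b = a := by
  rcases qb01 a with ha | ha <;> rcases qb01 b with hb | hb <;> subst ha <;> subst hb <;> decide

/-! ### Bell fidelity -/

def dEl (M : Matrix (Qb × Qb) (Qb × Qb) ℂ) (a b : Qb) : ℂ := M (a, a) (b, b)

lemma bell_apply (z a b : Qb) :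
    bellVec z 0 (a, b) = if a = b then sgn (a * z) * ((Real.sqrt 2 : ℂ))⁻¹ else 0 := by
  simp [bellVec, sgn, div_eq_mul_inv]

lemma diag_collapse (f : Qb × Qb → ℂ) (hf : ∀ p : Qb × Qb, p.1 ≠ p.2 → f p = 0) :
    ∑ p : Qb × Qb, f p = ∑ a : Qb, f (a, a) := by
  rw [Fintype.sum_prod_type]
  refine Finset.sum_congr rfl fun a _ => ?_
  refine Finset.sum_eq_single a (fun b _ hb => hf (a, b) (Ne.symm hb)) (by simp)

lemma bellFid (z : Qb) (M : Matrix (Qb × Qb) (Qb × Qb) ℂ) :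
    fidTo (bellVec z 0) M
      = (2:ℂ)⁻¹ * ∑ a : Qb, ∑ b : Qb, sgn ((a + b) * z) * dEl M a b := by
  unfold fidTo
  rw [diag_collapse _ (fun p hp => by
    rw [show bellVec z 0 p = bellVec z 0 (p.1, p.2) from rfl, bell_apply, if_neg hp]
    simp)]
  rw [Finset.mul_sum]
  refine Finset.sum_congr rfl fun a _ => ?_
  rw [diag_collapse _ (fun q hq => by
    rw [show bellVec z 0 (q.1, q.2) = _ from bell_apply z q.1 q.2, if_neg hq]
    simp), Finset.mul_sum]
  refine Finset.sum_congr rfl fun b _ => ?_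
  rw [bell_apply, if_pos rfl, bell_apply, if_pos rfl]
  rw [_root_.map_mul, star_sgn, show (starRingEnd ℂ) ((Real.sqrt 2 : ℂ))⁻¹ = ((Real.sqrt 2:ℂ))⁻¹ by
    rw [map_inv₀, Complex.conj_ofReal]]
  rw [add_mul, sgn_add]
  show _ = 2⁻¹ * (sgn (a*z) * sgn (b*z) * M (a,a) (b,b))
  linear_combination (sgn (a * z) * sgn (b * z) * M (a, a) (b, b)) * rinv2
/-! ### The action of `Pop` on GHZ components -/

def oconst (n : ℕ) (α : Qb) : GOut n := (α, fun _ => α, α)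

def sfun (n : ℕ) (x : Fin n → Qb) (α : Qb) : GIn n :=
  (α, fun j => (xprev n x j + α, x j + α), xlast n x + α)

lemma ite3 (P Q R : Prop) [Decidable P] [Decidable Q] [Decidable R] :
    ((if P then (1:ℂ) else 0) * (if Q then 1 else 0) * (if R then 1 else 0))
      = if P ∧ Q ∧ R then 1 else 0 := by
  split_ifs <;> simp_all

lemma pop_apply (n : ℕ) (x : Fin n → Qb) (α : Qb) (s : GIn n) :
    Pop n x (oconst n α) s = if s = sfun n x α then 1 else 0 := by
  have hpt : ∀ a p q xp xj : Qb,
      ((a = p + xp ∧ xj = q + (p + xp)) ↔ (p = xp + a ∧ q = xj + a)) := by decide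
  have hB : ∀ a b c : Qb, (a = b + c) ↔ (b = c + a) := by decide
  obtain ⟨sA, sM, sB⟩ := s
  show ((if α = sA then (1:ℂ) else 0)
      * (∏ j : Fin n, Kc (x j) α ((sM j).1 + xprev n x j, (sM j).2))
      * (if α = sB + xlast n x then 1 else 0)) = _
  simp only [Kc, Matrix.of_apply]
  rw [Finset.prod_boole, ite3]
  have hiff : (α = sA ∧ (∀ j ∈ (Finset.univ : Finset (Fin n)),
        α = (sM j).1 + xprev n x j ∧ x j = (sM j).2 + ((sM j).1 + xprev n x j)) ∧
        α = sB + xlast n x) ↔ ((sA, sM, sB) : GIn n) = sfun n x α := by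
    simp only [Finset.mem_univ, true_implies, sfun, Prod.mk.injEq, funext_iff, Prod.ext_iff]
    exact and_congr eq_comm (and_congr
      (forall_congr' fun j => hpt α ((sM j).1) ((sM j).2) (xprev n x j) (x j))
      (hB α sB (xlast n x)))
  simp only [hiff]

/-! ### GHZ fidelity collapse -/

lemma ghz_apply (n : ℕ) (o : GOut n) :
    ghzVec n o = ((Real.sqrt 2 : ℂ))⁻¹ *
      ((if o = oconst n 0 then 1 else 0) + (if o = oconst n 1 then 1 else 0)) := by
  have h0 : o = oconst n 0 ↔ (o.1 = 0 ∧ (∀ j, o.2.1 j = 0) ∧ o.2.2 = 0) := by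
    simp [oconst, Prod.ext_iff, funext_iff]
  have h1 : o = oconst n 1 ↔ (o.1 = 1 ∧ (∀ j, o.2.1 j = 1) ∧ o.2.2 = 1) := by
    simp [oconst, Prod.ext_iff, funext_iff]
  have hne : (0 : Qb) ≠ 1 := by decide
  show (if o.1 = 0 ∧ (∀ j, o.2.1 j = 0) ∧ o.2.2 = 0 then ((Real.sqrt 2 : ℂ))⁻¹
    else if o.1 = 1 ∧ (∀ j, o.2.1 j = 1) ∧ o.2.2 = 1 then ((Real.sqrt 2 : ℂ))⁻¹ else 0) = _
  simp only [h0, h1]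
  split_ifs with hP hQ hQ'
  · exact absurd (hP.1.symm.trans hQ.1) hne
  · ring
  · ring
  · ring

lemma sum_pt {γ : Type*} [Fintype γ] [DecidableEq γ] (a b : γ) (c : ℂ) (h : γ → ℂ) :
    ∑ o : γ, (c * ((if o = a then 1 else 0) + (if o = b then 1 else 0))) * h o
      = c * (h a + h b) := by
  simp only [mul_add, add_mul, ite_mul, one_mul, zero_mul, mul_ite, mul_one, mul_zero,
    Finset.sum_add_distrib, Finset.sum_ite_eq', Finset.mem_univ, if_true]

lemma fid_ghz (n : ℕ) (M : Matrix (GOut n) (GOut n) ℂ) :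
    fidTo (ghzVec n) M
      = (2:ℂ)⁻¹ * ∑ α : Qb, ∑ β : Qb, M (oconst n α) (oconst n β) := by
  have hstar : ∀ o, (starRingEnd ℂ) (ghzVec n o) = ghzVec n o := by
    intro o
    rw [ghz_apply, _root_.map_mul, map_add]
    simp [apply_ite (starRingEnd ℂ), map_inv₀, Complex.conj_ofReal]
  unfold fidTo
  simp only [hstar]
  have step : ∀ i, ∑ j, ghzVec n i * M i j * ghzVec n j
      = ghzVec n i * (((Real.sqrt 2 : ℂ))⁻¹ * (M i (oconst n 0) + M i (oconst n 1))) := by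
    intro i
    rw [← sum_pt (oconst n 0) (oconst n 1) (((Real.sqrt 2 : ℂ))⁻¹) (fun j => M i j)]
    rw [Finset.mul_sum]
    apply Finset.sum_congr rfl
    intro j _
    rw [ghz_apply n j]
    ring
  simp only [step]
  have step2 : ∑ i, ghzVec n i *
      (((Real.sqrt 2 : ℂ))⁻¹ * (M i (oconst n 0) + M i (oconst n 1)))
      = ((Real.sqrt 2:ℂ))⁻¹ * ((((Real.sqrt 2 : ℂ))⁻¹ * (M (oconst n 0) (oconst n 0) + M (oconst n 0) (oconst n 1)))
        + (((Real.sqrt 2 : ℂ))⁻¹ * (M (oconst n 1) (oconst n 0) + M (oconst n 1) (oconst n 1)))) := by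
    rw [← sum_pt (oconst n 0) (oconst n 1) (((Real.sqrt 2 : ℂ))⁻¹)
      (fun i => ((Real.sqrt 2 : ℂ))⁻¹ * (M i (oconst n 0) + M i (oconst n 1)))]
    apply Finset.sum_congr rfl
    intro i _
    rw [ghz_apply n i]
  rw [step2, sum_qb]
  rw [sum_qb (f := fun β => M (oconst n 0) (oconst n β)),
      sum_qb (f := fun β => M (oconst n 1) (oconst n β))]
  linear_combination (M (oconst n 0) (oconst n 0) + M (oconst n 0) (oconst n 1)
    + M (oconst n 1) (oconst n 0) + M (oconst n 1) (oconst n 1)) * rinv2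

lemma fid_channel (n : ℕ) (x : Fin n → Qb) (M : Matrix (GIn n) (GIn n) ℂ) :
    fidTo (ghzVec n) (Pop n x * M * (Pop n x)ᴴ)
      = (2:ℂ)⁻¹ * ∑ α : Qb, ∑ β : Qb, M (sfun n x α) (sfun n x β) := by
  rw [fid_ghz]
  congr 1
  refine Finset.sum_congr rfl fun α _ => Finset.sum_congr rfl fun β _ => ?_
  simp only [Matrix.mul_apply, Matrix.conjTranspose_apply, pop_apply]
  simp [apply_ite (starRingEnd ℂ), ite_mul, mul_ite, mul_one, mul_zero, one_mul, zero_mul,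
    Finset.sum_ite_eq', Finset.sum_ite_eq]
/-! ### `chainState` at the collapsed points -/

def avals (n : ℕ) (x : Fin n → Qb) (i : Fin (n + 1)) : Qb :=
  if h : (i : ℕ) = 0 then 0 else x ⟨(i : ℕ) - 1, by have := i.isLt; omega⟩

lemma avals_zero (n : ℕ) (x : Fin n → Qb) : avals n x 0 = 0 := by
  simp [avals]

lemma avals_succ (n : ℕ) (x : Fin n → Qb) (m : Fin n) : avals n x m.succ = x m := by
  unfold avals
  rw [dif_neg (by simp [Fin.val_succ])]
  congr 1

lemma left_sfun (n : ℕ) (x : Fin n → Qb) (α : Qb) (i : Fin (n + 1)) :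
    leftIdx n (sfun n x α) i = avals n x i + α := by
  unfold leftIdx avals sfun
  by_cases h : (i : ℕ) = 0
  · rw [dif_pos h, dif_pos h, zero_add]
  · rw [dif_neg h, dif_neg h]

lemma right_sfun (n : ℕ) (hn : 1 ≤ n) (x : Fin n → Qb) (α : Qb) (i : Fin (n + 1)) :
    rightIdx n (sfun n x α) i = avals n x i + α := by
  unfold rightIdx avals sfun
  by_cases h : (i : ℕ) < n
  · rw [dif_pos h]
    show xprev n x ⟨(i : ℕ), h⟩ + α = _
    unfold xprev
    by_cases h0 : (i : ℕ) = 0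
    · rw [dif_pos h0]
    · rw [dif_neg h0]
  · rw [dif_neg h]
    have hi : (i : ℕ) = n := by have := i.isLt; omega
    show xlast n x + α = _
    unfold xlast
    rw [dif_pos (by omega : 0 < n), dif_neg (by omega : ¬ (i : ℕ) = 0)]
    have hfin : (⟨n - 1, by omega⟩ : Fin n) = ⟨(i : ℕ) - 1, by have := i.isLt; omega⟩ := by
      ext; simp; omega
    rw [hfin]

lemma chain_sfun (n : ℕ) (hn : 1 ≤ n) (ρ : Fin (n + 1) → Matrix (Qb × Qb) (Qb × Qb) ℂ)
    (x : Fin n → Qb) (α β : Qb) :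
    chainState n ρ (sfun n x α) (sfun n x β)
      = ∏ i : Fin (n + 1), dEl (ρ i) (avals n x i + α) (avals n x i + β) := by
  show (∏ i : Fin (n + 1), ρ i
      (leftIdx n (sfun n x α) i, rightIdx n (sfun n x α) i)
      (leftIdx n (sfun n x β) i, rightIdx n (sfun n x β) i)) = _
  apply Finset.prod_congr rfl
  intro i _
  rw [left_sfun, right_sfun n hn, left_sfun, right_sfun n hn]
  rfl

/-! ### Reindexing the left-hand side -/

def reE (n : ℕ) : ((Fin n → Qb) × Qb) ≃ (Fin (n + 1) → Qb) where
  toFun p := fun i => avals n p.1 i + p.2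
  invFun j := (fun m => j m.succ + j 0, j 0)
  left_inv p := by
    obtain ⟨x, α⟩ := p
    refine Prod.ext (funext fun m => ?_) ?_
    · show avals n x m.succ + α + (avals n x 0 + α) = x m
      rw [avals_zero, zero_add, avals_succ, addadd]
    · show avals n x 0 + α = α
      rw [avals_zero, zero_add]
  right_inv j := by
    funext i
    show avals n (fun m => j m.succ + j 0) i + j 0 = j i
    by_cases h : (i : ℕ) = 0
    · have h0 : i = 0 := by ext; exact h
      subst h0
      rw [avals_zero, zero_add]
    · have hstep : (⟨(i : ℕ) - 1, by have := i.isLt; omega⟩ : Fin n).succ = i := by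
        ext
        simp only [Fin.val_succ]
        omega
      have : avals n (fun m => j m.succ + j 0) i = j i + j 0 := by
        unfold avals
        rw [dif_neg h]
        beta_reduce
        rw [hstep]
      rw [this, addadd]

lemma fidTo_sum {m' ι : Type*} [Fintype m'] [Fintype ι] (ψ : m' → ℂ)
    (M : ι → Matrix m' m' ℂ) :
    fidTo ψ (∑ i, M i) = ∑ i, fidTo ψ (M i) := by
  unfold fidTo
  simp only [Matrix.sum_apply, Finset.sum_mul, Finset.mul_sum]
  exact Eq.trans (Finset.sum_congr rfl fun i _ => Finset.sum_comm) Finset.sum_comm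
lemma lhs_S (n : ℕ) (hn : 1 ≤ n) (ρ : Fin (n + 1) → Matrix (Qb × Qb) (Qb × Qb) ℂ) :
    fidTo (ghzVec n) (ghzChannel n (chainState n ρ))
      = (2:ℂ)⁻¹ * ∑ j : Fin (n + 1) → Qb, ∑ c : Qb,
          ∏ i : Fin (n + 1), dEl (ρ i) (j i) (j i + c) := by
  rw [ghzChannel, fidTo_sum]
  simp only [fid_channel, chain_sfun n hn ρ]
  rw [← Finset.mul_sum]
  congr 1
  rw [← Equiv.sum_comp (reE n)
    (fun j => ∑ c : Qb, ∏ i : Fin (n + 1), dEl (ρ i) (j i) (j i + c)),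
    Fintype.sum_prod_type]
  apply Finset.sum_congr rfl; intro x _
  apply Finset.sum_congr rfl; intro α _
  rw [← Equiv.sum_comp (Equiv.addLeft α)
    (fun β => ∏ i : Fin (n + 1), dEl (ρ i) (avals n x i + α) (avals n x i + β))]
  apply Finset.sum_congr rfl; intro c _
  apply Finset.prod_congr rfl; intro i _
  show dEl (ρ i) (avals n x i + α) (avals n x i + (α + c))
      = dEl (ρ i) (reE n (x, α) i) (reE n (x, α) i + c)
  rw [← add_assoc]
  rfl
/-! ### Right-hand side helpers -/

lemma bellFid' (z : Qb) (M : Matrix (Qb × Qb) (Qb × Qb) ℂ) :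
    fidTo (bellVec z 0) M
      = (2:ℂ)⁻¹ * ∑ p : Qb × Qb, sgn ((p.1 + p.2) * z) * dEl M p.1 p.2 := by
  rw [bellFid, Fintype.sum_prod_type]

lemma sgn_sum {ι : Type*} (s : Finset ι) (t : ι → Qb) :
    sgn (∑ m ∈ s, t m) = ∏ m ∈ s, sgn (t m) := by
  induction s using Finset.cons_induction with
  | empty => simp [sgn_zero]
  | cons a s ha ih => rw [Finset.sum_cons, Finset.prod_cons, sgn_add, ih]

lemma prod_ite_two (n : ℕ) (c : Fin n → Prop) [∀ m, Decidable (c m)] :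
    (∏ m : Fin n, if c m then (2:ℂ) else 0)
      = if ∀ m, c m then (2:ℂ) ^ n else 0 := by
  by_cases h : ∀ m, c m
  · rw [if_pos h, Finset.prod_congr rfl fun m _ => if_pos (h m)]
    simp
  · rw [if_neg h]
    obtain ⟨m, hm⟩ := not_forall.mp h
    exact Finset.prod_eq_zero (Finset.mem_univ m) (if_neg hm)

lemma zsum (n : ℕ) (e0 : Qb) (e : Fin n → Qb) :
    ∑ z : Fin n → Qb, ∏ m : Fin n, sgn ((e0 + e m) * z m)
      = if ∀ m, e m = e0 then (2:ℂ) ^ n else 0 := by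
  have haux : ∀ a b : Qb, (a + b = 0) ↔ (b = a) := by decide
  rw [← Fintype.piFinset_univ,
    ← Finset.prod_univ_sum (fun _ => (Finset.univ : Finset Qb))
      (fun m t => sgn ((e0 + e m) * t)),
    Finset.prod_congr rfl fun m _ => sum_sgn (e0 + e m),
    prod_ite_two n (fun m => e0 + e m = 0)]
  simp only [haux]

lemma addab : ∀ a b : Qb, a + (a + b) = b := by decide

def psiE (n : ℕ) : (Fin (n + 1) → Qb × Qb) ≃ (Fin (n + 1) → Qb × Qb) where
  toFun Q := fun i => ((Q i).1, (Q i).1 + (Q i).2)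
  invFun Q := fun i => ((Q i).1, (Q i).1 + (Q i).2)
  left_inv Q := by funext i; exact Prod.ext rfl (addab _ _)
  right_inv Q := by funext i; exact Prod.ext rfl (addab _ _)

lemma sum_const_fn (n : ℕ) (G : (Fin (n + 1) → Qb) → ℂ) :
    ∑ w : Fin (n + 1) → Qb, (if ∀ m : Fin n, w m.succ = w 0 then (1:ℂ) else 0) * G w
      = ∑ c : Qb, G (fun _ => c) := by
  have key : ∀ w : Fin (n + 1) → Qb,
      (if ∀ m : Fin n, w m.succ = w 0 then (1:ℂ) else 0)
        = ∑ c : Qb, (if w = fun _ => c then (1:ℂ) else 0) := by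
    intro w
    by_cases h : ∀ m : Fin n, w m.succ = w 0
    · have hw : ∀ c : Qb, (w = fun _ => c) ↔ c = w 0 := by
        intro c
        constructor
        · intro hc; exact (congrFun hc 0).symm
        · intro hc
          funext i
          induction i using Fin.cases with
          | zero => exact hc.symm
          | succ m => exact (h m).trans hc.symm
      rw [if_pos h]
      simp only [hw]
      simp
    · rw [if_neg h]
      symm
      refine Finset.sum_eq_zero fun c _ => ?_
      rw [if_neg]
      intro hc
      exact h fun m => by rw [hc]
  simp only [key]
  rw [Finset.sum_congr rfl fun w _ => Finset.sum_mul ..]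
  rw [Finset.sum_comm]
  apply Finset.sum_congr rfl
  intro c _
  simp [ite_mul, Finset.sum_ite_eq']
lemma final_reindex (n : ℕ) (ρ : Fin (n + 1) → Matrix (Qb × Qb) (Qb × Qb) ℂ) :
    ∑ p0 : Qb × Qb, ∑ g : Fin n → Qb × Qb,
      (if ∀ m : Fin n, (g m).1 + (g m).2 = p0.1 + p0.2 then (1:ℂ) else 0) *
        (dEl (ρ 0) p0.1 p0.2 * ∏ m : Fin n, dEl (ρ m.succ) (g m).1 (g m).2)
    = ∑ j : Fin (n + 1) → Qb, ∑ c : Qb,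
        ∏ i : Fin (n + 1), dEl (ρ i) (j i) (j i + c) := by
  calc
    ∑ p0 : Qb × Qb, ∑ g : Fin n → Qb × Qb,
      (if ∀ m : Fin n, (g m).1 + (g m).2 = p0.1 + p0.2 then (1:ℂ) else 0) *
        (dEl (ρ 0) p0.1 p0.2 * ∏ m : Fin n, dEl (ρ m.succ) (g m).1 (g m).2)
      = ∑ pq : (Qb × Qb) × (Fin n → Qb × Qb),
          (if ∀ m : Fin n, (pq.2 m).1 + (pq.2 m).2 = pq.1.1 + pq.1.2 then (1:ℂ) else 0) *
          (dEl (ρ 0) pq.1.1 pq.1.2 * ∏ m : Fin n, dEl (ρ m.succ) (pq.2 m).1 (pq.2 m).2) := by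
        exact (Fintype.sum_prod_type (fun pq : (Qb × Qb) × (Fin n → Qb × Qb) =>
          (if ∀ m : Fin n, (pq.2 m).1 + (pq.2 m).2 = pq.1.1 + pq.1.2 then (1:ℂ) else 0) *
          (dEl (ρ 0) pq.1.1 pq.1.2 *
            ∏ m : Fin n, dEl (ρ m.succ) (pq.2 m).1 (pq.2 m).2))).symm
    _ = ∑ P : Fin (n + 1) → Qb × Qb,
          (if ∀ m : Fin n, (P m.succ).1 + (P m.succ).2 = (P 0).1 + (P 0).2 then (1:ℂ) else 0) *
          ∏ i : Fin (n + 1), dEl (ρ i) (P i).1 (P i).2 := by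
        apply Fintype.sum_equiv (Fin.consEquiv (fun _ : Fin (n + 1) => Qb × Qb))
        intro pq
        simp only [Fin.consEquiv, Equiv.coe_fn_mk, Fin.cons_zero, Fin.cons_succ,
          Fin.prod_univ_succ]
    _ = ∑ Q : Fin (n + 1) → Qb × Qb,
          (if ∀ m : Fin n, (Q m.succ).2 = (Q 0).2 then (1:ℂ) else 0) *
          ∏ i : Fin (n + 1), dEl (ρ i) (Q i).1 ((Q i).1 + (Q i).2) := by
        symm
        apply Fintype.sum_equiv (psiE n)
        intro Q
        simp only [psiE, Equiv.coe_fn_mk, addab]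
    _ = ∑ jw : (Fin (n + 1) → Qb) × (Fin (n + 1) → Qb),
          (if ∀ m : Fin n, jw.2 m.succ = jw.2 0 then (1:ℂ) else 0) *
          ∏ i : Fin (n + 1), dEl (ρ i) (jw.1 i) (jw.1 i + jw.2 i) := by
        symm
        apply Fintype.sum_equiv (Equiv.arrowProdEquivProdArrow (Fin (n + 1)) (fun _ => Qb) (fun _ => Qb)).symm
        intro jw
        simp only [Equiv.arrowProdEquivProdArrow, Equiv.symm, Equiv.coe_fn_mk]
        rfl
    _ = ∑ j : Fin (n + 1) → Qb, ∑ w : Fin (n + 1) → Qb,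
          (if ∀ m : Fin n, w m.succ = w 0 then (1:ℂ) else 0) *
          ∏ i : Fin (n + 1), dEl (ρ i) (j i) (j i + w i) := by
        exact Fintype.sum_prod_type (fun jw : (Fin (n + 1) → Qb) × (Fin (n + 1) → Qb) =>
          (if ∀ m : Fin n, jw.2 m.succ = jw.2 0 then (1:ℂ) else 0) *
          ∏ i : Fin (n + 1), dEl (ρ i) (jw.1 i) (jw.1 i + jw.2 i))
    _ = ∑ j : Fin (n + 1) → Qb, ∑ c : Qb,
          ∏ i : Fin (n + 1), dEl (ρ i) (j i) (j i + c) :=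
        Finset.sum_congr rfl fun j _ =>
          sum_const_fn n (fun w => ∏ i : Fin (n + 1), dEl (ρ i) (j i) (j i + w i))
lemma rhs_S (n : ℕ) (ρ : Fin (n + 1) → Matrix (Qb × Qb) (Qb × Qb) ℂ) :
    ∑ z : Fin n → Qb,
        fidTo (bellVec (∑ j, z j) 0) (ρ 0)
          * ∏ j : Fin n, fidTo (bellVec (z j) 0) (ρ j.succ)
      = (2:ℂ)⁻¹ * ∑ j : Fin (n + 1) → Qb, ∑ c : Qb,
          ∏ i : Fin (n + 1), dEl (ρ i) (j i) (j i + c) := by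
  have h2n : ((2:ℂ)⁻¹) ^ n * (2:ℂ) ^ n = 1 := by
    rw [← mul_pow]; norm_num
  have step1 : ∀ z : Fin n → Qb,
      fidTo (bellVec (∑ j, z j) 0) (ρ 0) * ∏ j : Fin n, fidTo (bellVec (z j) 0) (ρ j.succ)
        = ((2:ℂ)⁻¹) ^ (n + 1) * ∑ p0 : Qb × Qb, ∑ g : Fin n → Qb × Qb,
            (∏ m : Fin n, sgn (((p0.1 + p0.2) + ((g m).1 + (g m).2)) * z m)) *
            (dEl (ρ 0) p0.1 p0.2 * ∏ m : Fin n, dEl (ρ m.succ) (g m).1 (g m).2) := by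
    intro z
    simp only [bellFid']
    rw [Finset.prod_mul_distrib, Finset.prod_const, Finset.card_univ, Fintype.card_fin]
    rw [Finset.prod_univ_sum (fun _ => (Finset.univ : Finset (Qb × Qb)))
        (fun m p => sgn ((p.1 + p.2) * z m) * dEl (ρ m.succ) p.1 p.2),
      Fintype.piFinset_univ]
    have hc : ∀ A B : ℂ, (2⁻¹ * A) * (((2:ℂ)⁻¹) ^ n * B) = ((2:ℂ)⁻¹) ^ (n + 1) * (A * B) := by
      intro A B; rw [pow_succ]; ring
    rw [hc]
    congr 1
    rw [Finset.sum_mul]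
    apply Finset.sum_congr rfl; intro p0 _
    rw [Finset.mul_sum]
    apply Finset.sum_congr rfl; intro g _
    have hsgn : sgn ((p0.1 + p0.2) * ∑ j, z j) * ∏ m : Fin n, sgn (((g m).1 + (g m).2) * z m)
        = ∏ m : Fin n, sgn (((p0.1 + p0.2) + ((g m).1 + (g m).2)) * z m) := by
      rw [Finset.mul_sum, sgn_sum, ← Finset.prod_mul_distrib]
      apply Finset.prod_congr rfl; intro m _
      rw [← sgn_add, ← add_mul]
    rw [Finset.prod_mul_distrib, ← hsgn]
    ring
  simp only [step1]
  rw [← Finset.mul_sum]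
  rw [Finset.sum_comm]
  rw [Finset.sum_congr rfl fun p0 _ => Finset.sum_comm]
  rw [Finset.sum_congr rfl fun p0 _ => Finset.sum_congr rfl fun g _ => (Finset.sum_mul ..).symm]
  simp only [zsum]
  have hsplit : ∀ (P : Prop) [Decidable P] (D : ℂ),
      (if P then (2:ℂ) ^ n else 0) * D = (2:ℂ) ^ n * ((if P then 1 else 0) * D) := by
    intro P _ D; split_ifs <;> ring
  simp only [hsplit]
  simp only [← Finset.mul_sum]
  rw [final_reindex n ρ]
  rw [pow_succ]
  linear_combination (2⁻¹ * ∑ j : Fin (n + 1) → Qb, ∑ c : Qb,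
      ∏ i : Fin (n + 1), dEl (ρ i) (j i) (j i + c)) * h2n
/-- **Fidelity after GHZ entanglement swapping** (Proposition 2 of the paper). -/
theorem fidelity_after_ghz_entanglement_swapping (n : ℕ) (hn : 1 ≤ n)
    (ρ : Fin (n + 1) → Matrix (Qb × Qb) (Qb × Qb) ℂ)
    (hρ : ∀ i, (ρ i).PosSemidef ∧ (ρ i).trace = 1) :
    fidTo (ghzVec n) (ghzChannel n (chainState n ρ))
      = ∑ z : Fin n → Qb,
          fidTo (bellVec (∑ j, z j) 0) (ρ 0)
            * ∏ j : Fin n, fidTo (bellVec (z j) 0) (ρ j.succ) := by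
  rw [lhs_S n hn ρ]
  exact (rhs_S n ρ).symm
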